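/- Let X : Δ_*[0,T] → ℝ^n and Y : Δ^*[0,T] → ℝ^n be continuous, with s ↦ X(t,s) C¹ on [0,t] and s ↦ Y(t,s) C¹ on [t,T] for each t, and let G : ℝ^n → ℝ^n be continuous. Suppose t ↦ X(s,t) is C¹ for each fixed s with ∂X(s,t)/∂t = f(s,t) for a continuous f on Δ_*. Define Φ(t) = ∫ₜ^T ⟨Y(s,s), X(s,t)⟩ ds + ⟨G(X(T,T)), X(T,t)⟩. Then Φ is differentiable on [0,T] with Φ'(t) = −⟨Y(t,t), X(t,t)⟩ + ∫ₜ^T ⟨Y(s,s), f(s,t)⟩ ds + ⟨G(X(T,T)), f(T,t)⟩. -/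

import Mathlib

open scoped RealInnerProductSpace
open Set intervalIntegral

lemma lyap_aux (T : ℝ) (P g : ℝ → ℝ → ℝ)
    (hP : ContinuousOn (fun p : ℝ × ℝ => P p.1 p.2) {p : ℝ × ℝ | 0 ≤ p.2 ∧ p.2 ≤ p.1 ∧ p.1 ≤ T})
    (hg : ContinuousOn (fun p : ℝ × ℝ => g p.1 p.2) {p : ℝ × ℝ | 0 ≤ p.2 ∧ p.2 ≤ p.1 ∧ p.1 ≤ T})
    (hgc : ∀ s, 0 ≤ s → s ≤ T → ContinuousOn (g s) (Set.Icc 0 s))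
    (hftc : ∀ s a b, 0 ≤ a → a ≤ b → b ≤ s → s ≤ T → (∫ u in a..b, g s u) = P s b - P s a)
    (t : ℝ) (ht0 : 0 ≤ t) (htT : t ≤ T) :
    HasDerivWithinAt (fun t' => ∫ s in t'..T, P s t')
      (-(P t t) + ∫ s in t..T, g s t) (Set.Icc 0 T) t := by
  have hT0 : 0 ≤ T := ht0.trans htT
  set Δ : Set (ℝ × ℝ) := {p : ℝ × ℝ | 0 ≤ p.2 ∧ p.2 ≤ p.1 ∧ p.1 ≤ T} with hΔdef
  -- slice continuity and integrability
  have hPs : ∀ v, 0 ≤ v → ContinuousOn (fun s => P s v) (Set.Icc v T) := by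
    intro v hv
    have := hP.comp ((continuous_id.prodMk continuous_const).continuousOn
      (s := Set.Icc v T))
      (fun s hs => show (0:ℝ) ≤ v ∧ v ≤ s ∧ s ≤ T from ⟨hv, hs.1, hs.2⟩)
    exact this
  have hgs : ∀ v, 0 ≤ v → ContinuousOn (fun s => g s v) (Set.Icc v T) := by
    intro v hv
    have := hg.comp ((continuous_id.prodMk continuous_const).continuousOn
      (s := Set.Icc v T))
      (fun s hs => show (0:ℝ) ≤ v ∧ v ≤ s ∧ s ≤ T from ⟨hv, hs.1, hs.2⟩)
    exact this
  have hPi : ∀ v a b, 0 ≤ v → v ≤ a → v ≤ b → a ≤ T → b ≤ T →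
      IntervalIntegrable (fun s => P s v) MeasureTheory.volume a b := by
    intro v a b hv hva hvb haT hbT
    exact ((hPs v hv).mono (Set.uIcc_subset_Icc ⟨hva, haT⟩ ⟨hvb, hbT⟩)).intervalIntegrable
  have hgi : ∀ v a b, 0 ≤ v → v ≤ a → v ≤ b → a ≤ T → b ≤ T →
      IntervalIntegrable (fun s => g s v) MeasureTheory.volume a b := by
    intro v a b hv hva hvb haT hbT
    exact ((hgs v hv).mono (Set.uIcc_subset_Icc ⟨hva, haT⟩ ⟨hvb, hbT⟩)).intervalIntegrable
  -- compactness, bound, uniform continuity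
  have hsub : Δ ⊆ Set.Icc (0:ℝ) T ×ˢ Set.Icc (0:ℝ) T := by
    rintro ⟨a, b⟩ ⟨h1, h2, h3⟩
    exact ⟨⟨h1.trans h2, h3⟩, ⟨h1, h2.trans h3⟩⟩
  have hΔcl : IsClosed Δ := by
    have h : Δ = {p : ℝ × ℝ | 0 ≤ p.2} ∩ ({p | p.2 ≤ p.1} ∩ {p | p.1 ≤ T}) := rfl
    rw [h]
    exact (isClosed_le continuous_const continuous_snd).inter
      ((isClosed_le continuous_snd continuous_fst).inter
        (isClosed_le continuous_fst continuous_const))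
  have hΔcomp : IsCompact Δ := (isCompact_Icc.prod isCompact_Icc).of_isClosed_subset hΔcl hsub
  obtain ⟨Mg, hMg⟩ := hΔcomp.exists_bound_of_continuousOn hg
  have httΔ : ((t, t) : ℝ × ℝ) ∈ Δ := ⟨ht0, le_rfl, htT⟩
  have hMg0 : 0 ≤ Mg := (norm_nonneg _).trans (hMg (t, t) httΔ)
  have hgu := hΔcomp.uniformContinuousOn_of_continuous hg
  rw [Metric.uniformContinuousOn_iff] at hgu
  have hPu := hΔcomp.uniformContinuousOn_of_continuous hP
  rw [Metric.uniformContinuousOn_iff] at hPu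
  rw [hasDerivWithinAt_iff_tendsto_slope, Metric.tendsto_nhdsWithin_nhds]
  intro ε hε
  obtain ⟨δ₁, hδ₁pos, hδ₁⟩ := hgu (ε / 4 / (T + 1)) (by positivity)
  obtain ⟨δ₂, hδ₂pos, hδ₂⟩ := hPu (ε / 4) (by positivity)
  refine ⟨min (min δ₁ δ₂) (ε / 4 / (Mg + 1)), by positivity, ?_⟩
  intro t' ht' hdist
  obtain ⟨⟨ht'0, ht'T⟩, hne⟩ := ht'
  have hne : t' ≠ t := by simpa using hne
  have hne' : t' - t ≠ 0 := sub_ne_zero.2 hne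
  rw [Real.dist_eq] at hdist
  have hdδ₁ : |t' - t| < δ₁ := lt_of_lt_of_le hdist ((min_le_left _ _).trans (min_le_left _ _))
  have hdδ₂ : |t' - t| < δ₂ := lt_of_lt_of_le hdist ((min_le_left _ _).trans (min_le_right _ _))
  have hdM : |t' - t| < ε / 4 / (Mg + 1) := lt_of_lt_of_le hdist (min_le_right _ _)
  set m := max t t' with hm
  set mn := min t t' with hmn
  have htm : t ≤ m := le_max_left _ _
  have ht'm : t' ≤ m := le_max_right _ _
  have hmT : m ≤ T := max_le htT ht'T
  have hmn0 : 0 ≤ mn := le_min ht0 ht'0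
  have hmnt : mn ≤ t := min_le_left _ _
  have hmnt' : mn ≤ t' := min_le_right _ _
  have hmmn : m - mn = |t' - t| := by
    rcases le_total t t' with h | h
    · rw [hm, hmn, max_eq_right h, min_eq_left h, abs_of_nonneg (by linarith)]
    · rw [hm, hmn, max_eq_left h, min_eq_right h, abs_of_nonpos (by linarith)]; ring
  have huIcc : Set.uIcc t t' = Set.Icc mn m := rfl
  -- decomposition of the difference
  have hdecomp : (∫ s in t'..T, P s t') - (∫ s in t..T, P s t) =
      (∫ s in m..T, (P s t' - P s t)) - ∫ s in t..t', P s mn := by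
    rcases le_total t t' with h | h
    · rw [hm, hmn, max_eq_right h, min_eq_left h]
      have e1 : ∫ s in t'..T, (P s t' - P s t) =
          (∫ s in t'..T, P s t') - ∫ s in t'..T, P s t :=
        integral_sub (hPi t' t' T ht'0 le_rfl ht'T ht'T le_rfl)
          (hPi t t' T ht0 h htT ht'T le_rfl)
      have e2 : (∫ s in t..t', P s t) + ∫ s in t'..T, P s t = ∫ s in t..T, P s t :=
        integral_add_adjacent_intervals (hPi t t t' ht0 le_rfl h htT ht'T)
          (hPi t t' T ht0 h htT ht'T le_rfl)
      rw [e1, ← e2]; ring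
    · rw [hm, hmn, max_eq_left h, min_eq_right h]
      have e1 : ∫ s in t..T, (P s t' - P s t) =
          (∫ s in t..T, P s t') - ∫ s in t..T, P s t :=
        integral_sub (hPi t' t T ht'0 h ht'T htT le_rfl)
          (hPi t t T ht0 le_rfl htT htT le_rfl)
      have e2 : (∫ s in t'..t, P s t') + ∫ s in t..T, P s t' = ∫ s in t'..T, P s t' :=
        integral_add_adjacent_intervals (hPi t' t' t ht'0 le_rfl h ht'T htT)
          (hPi t' t T ht'0 h ht'T htT le_rfl)
      have e3 : ∫ s in t..t', P s t' = -∫ s in t'..t, P s t' := integral_symm t' t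
      rw [e1, e3, ← e2]; ring
  -- split off the linear part
  set D : ℝ → ℝ := fun s => P s t' - P s t - (t' - t) * g s t with hD
  have hDi : IntervalIntegrable D MeasureTheory.volume m T := by
    apply IntervalIntegrable.sub
    · exact (hPi t' m T ht'0 ht'm ht'T hmT le_rfl).sub (hPi t m T ht0 htm htT hmT le_rfl)
    · exact (hgi t m T ht0 htm htT hmT le_rfl).const_mul _
  have hsplit2 : ∫ s in m..T, (P s t' - P s t) =
      (∫ s in m..T, D s) + (t' - t) * ∫ s in m..T, g s t := by
    have e : ∫ s in m..T, (P s t' - P s t) = ∫ s in m..T, (D s + (t' - t) * g s t) :=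
      integral_congr (fun s _ => by simp only [hD]; ring)
    rw [e, integral_add hDi ((hgi t m T ht0 htm htT hmT le_rfl).const_mul _),
      integral_const_mul]
  have hsplit3 : (∫ s in t..m, g s t) + ∫ s in m..T, g s t = ∫ s in t..T, g s t :=
    integral_add_adjacent_intervals (hgi t t m ht0 le_rfl htm htT hmT)
      (hgi t m T ht0 htm htT hmT le_rfl)
  have e4 : ∫ s in t..t', (P s mn - P t t) = (∫ s in t..t', P s mn) - (t' - t) * P t t := by
    rw [integral_sub (hPi mn t t' hmn0 hmnt hmnt' htT ht'T) intervalIntegrable_const,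
      integral_const, smul_eq_mul]
  -- the key algebraic identity for the slope
  have key : slope (fun t' => ∫ s in t'..T, P s t') t t' - (-(P t t) + ∫ s in t..T, g s t)
      = (∫ s in m..T, D s) / (t' - t) - (∫ s in t..m, g s t)
        - (∫ s in t..t', (P s mn - P t t)) / (t' - t) := by
    rw [slope_def_field, hdecomp, hsplit2, ← hsplit3, e4]
    field_simp
    ring
  -- bound 1
  have bD : ∀ s ∈ Set.uIoc m T, ‖D s‖ ≤ ε / 4 / (T + 1) * |t' - t| := by
    intro s hs
    rw [Set.uIoc_of_le hmT] at hs
    have hms : m < s := hs.1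
    have hsT : s ≤ T := hs.2
    have h0s : 0 ≤ s := hmn0.trans (hmnt.trans (htm.trans hms.le))
    have hint : IntervalIntegrable (g s) MeasureTheory.volume t t' :=
      ((hgc s h0s hsT).mono (Set.uIcc_subset_Icc ⟨ht0, htm.trans hms.le⟩
        ⟨ht'0, ht'm.trans hms.le⟩)).intervalIntegrable
    have hgift : ∫ u in t..t', g s u = P s t' - P s t := by
      rcases le_total t t' with h | h
      · exact hftc s t t' ht0 h (ht'm.trans hms.le) hsT
      · rw [integral_symm, hftc s t' t ht'0 h (htm.trans hms.le) hsT]; ring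
    have hDs : D s = ∫ u in t..t', (g s u - g s t) := by
      rw [integral_sub hint intervalIntegrable_const, integral_const, smul_eq_mul, hgift]
    rw [hDs]
    apply norm_integral_le_of_norm_le_const
    intro u hu
    have hu' : u ∈ Set.Icc mn m := by
      rw [← huIcc]; exact Set.uIoc_subset_uIcc hu
    have hsu : ((s, u) : ℝ × ℝ) ∈ Δ := ⟨hmn0.trans hu'.1, hu'.2.trans hms.le, hsT⟩
    have hst : ((s, t) : ℝ × ℝ) ∈ Δ := ⟨ht0, htm.trans hms.le, hsT⟩
    have hdd : dist ((s, u) : ℝ × ℝ) ((s, t) : ℝ × ℝ) < δ₁ := by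
      rw [Prod.dist_eq]
      simp only [Real.dist_eq, sub_self, abs_zero]
      have h1 : |u - t| ≤ m - mn := by
        rw [abs_le]; constructor <;> [linarith [hu'.1, hu'.2, hmnt, htm]; skip]
        linarith [hu'.1, hu'.2, hmnt, htm]
      have : max (0:ℝ) |u - t| = |u - t| := max_eq_right (abs_nonneg _)
      rw [this]
      calc |u - t| ≤ m - mn := h1
        _ = |t' - t| := hmmn
        _ < δ₁ := hdδ₁
    have := hδ₁ (s, u) hsu (s, t) hst hdd
    rw [Real.dist_eq] at this
    rw [Real.norm_eq_abs]
    exact this.le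
  have b1 : ‖∫ s in m..T, D s‖ ≤ (ε / 4 / (T + 1) * |t' - t|) * |T - m| :=
    norm_integral_le_of_norm_le_const bD
  have term1 : |(∫ s in m..T, D s) / (t' - t)| ≤ ε / 4 := by
    rw [abs_div, div_le_iff₀ (abs_pos.2 hne')]
    calc |∫ s in m..T, D s| ≤ (ε / 4 / (T + 1) * |t' - t|) * |T - m| := by
          rw [← Real.norm_eq_abs]; exact b1
      _ ≤ (ε / 4 / (T + 1) * |t' - t|) * (T + 1) := by
          apply mul_le_mul_of_nonneg_left _ (by positivity)
          rw [abs_of_nonneg (by linarith)]; linarith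
      _ = ε / 4 * |t' - t| := by field_simp
  -- bound 2
  have term2 : |∫ s in t..m, g s t| ≤ ε / 4 := by
    have hb : ‖∫ s in t..m, g s t‖ ≤ Mg * |m - t| := by
      apply norm_integral_le_of_norm_le_const
      intro s hs
      rw [Set.uIoc_of_le htm] at hs
      exact hMg (s, t) ⟨ht0, hs.1.le, hs.2.trans hmT⟩
    rw [Real.norm_eq_abs] at hb
    have h3 : |m - t| ≤ |t' - t| := by
      rw [abs_of_nonneg (by linarith), ← hmmn]; linarith
    calc |∫ s in t..m, g s t| ≤ Mg * |m - t| := hb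
      _ ≤ Mg * (ε / 4 / (Mg + 1)) := by
          apply mul_le_mul_of_nonneg_left _ hMg0
          exact h3.trans hdM.le
      _ ≤ ε / 4 := by
          have h4 : Mg / (Mg + 1) ≤ 1 := by
            rw [div_le_one (by positivity)]; linarith
          calc Mg * (ε / 4 / (Mg + 1)) = ε / 4 * (Mg / (Mg + 1)) := by ring
            _ ≤ ε / 4 * 1 := mul_le_mul_of_nonneg_left h4 (by positivity)
            _ = ε / 4 := mul_one _
  -- bound 3
  have b3 : ‖∫ s in t..t', (P s mn - P t t)‖ ≤ ε / 4 * |t' - t| := by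
    apply norm_integral_le_of_norm_le_const
    intro s hs
    have hs' : s ∈ Set.Icc mn m := by rw [← huIcc]; exact Set.uIoc_subset_uIcc hs
    have hsmn : ((s, mn) : ℝ × ℝ) ∈ Δ := ⟨hmn0, hs'.1, hs'.2.trans hmT⟩
    have hdd : dist ((s, mn) : ℝ × ℝ) ((t, t) : ℝ × ℝ) < δ₂ := by
      rw [Prod.dist_eq]
      simp only [Real.dist_eq]
      have h1 : |s - t| ≤ m - mn := by
        rw [abs_le]; constructor <;> linarith [hs'.1, hs'.2, hmnt, htm]
      have h2 : |mn - t| ≤ m - mn := by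
        rw [abs_le]; constructor <;> linarith [hmnt, htm]
      calc max |s - t| |mn - t| ≤ m - mn := max_le h1 h2
        _ = |t' - t| := hmmn
        _ < δ₂ := hdδ₂
    have := hδ₂ (s, mn) hsmn (t, t) httΔ hdd
    rw [Real.dist_eq] at this
    rw [Real.norm_eq_abs]
    exact this.le
  have term3 : |(∫ s in t..t', (P s mn - P t t)) / (t' - t)| ≤ ε / 4 := by
    rw [abs_div, div_le_iff₀ (abs_pos.2 hne')]
    rw [← Real.norm_eq_abs]
    exact b3
  -- combine
  rw [Real.dist_eq, key]
  calc |(∫ s in m..T, D s) / (t' - t) - (∫ s in t..m, g s t)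
        - (∫ s in t..t', (P s mn - P t t)) / (t' - t)|
      ≤ |(∫ s in m..T, D s) / (t' - t) - (∫ s in t..m, g s t)|
        + |(∫ s in t..t', (P s mn - P t t)) / (t' - t)| := abs_sub _ _
    _ ≤ |(∫ s in m..T, D s) / (t' - t)| + |∫ s in t..m, g s t|
        + |(∫ s in t..t', (P s mn - P t t)) / (t' - t)| := by
          have := abs_sub ((∫ s in m..T, D s) / (t' - t)) (∫ s in t..m, g s t)
          linarith
    _ < ε := by linarith

/-- Chain rule for the Lyapunov functional
`Φ(t) = ∫ₜᵀ ⟨Y(s,s), X(s,t)⟩ ds + ⟨G(X(T,T)), X(T,t)⟩`: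
`Φ'(t) = −⟨Y(t,t), X(t,t)⟩ + ∫ₜᵀ ⟨Y(s,s), f(s,t)⟩ ds + ⟨G(X(T,T)), f(T,t)⟩`. -/
theorem stmt15 (n : ℕ) (T : ℝ) (hT : 0 < T)
    (X Y f : ℝ → ℝ → EuclideanSpace ℝ (Fin n))
    (G : EuclideanSpace ℝ (Fin n) → EuclideanSpace ℝ (Fin n)) (hG : Continuous G)
    (hXcont : ContinuousOn (fun p : ℝ × ℝ => X p.1 p.2)
      {p : ℝ × ℝ | 0 ≤ p.2 ∧ p.2 ≤ p.1 ∧ p.1 ≤ T})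
    (hYcont : ContinuousOn (fun p : ℝ × ℝ => Y p.1 p.2)
      {p : ℝ × ℝ | 0 ≤ p.1 ∧ p.1 ≤ p.2 ∧ p.2 ≤ T})
    (hfcont : ContinuousOn (fun p : ℝ × ℝ => f p.1 p.2)
      {p : ℝ × ℝ | 0 ≤ p.2 ∧ p.2 ≤ p.1 ∧ p.1 ≤ T})
    (hXC1 : ∀ t ∈ Set.Icc (0:ℝ) T, ContDiffOn ℝ 1 (X t) (Set.Icc 0 t))
    (hYC1 : ∀ t ∈ Set.Icc (0:ℝ) T, ContDiffOn ℝ 1 (Y t) (Set.Icc t T))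
    (hXder : ∀ s t : ℝ, 0 ≤ t → t ≤ s → s ≤ T →
      HasDerivWithinAt (fun u => X s u) (f s t) (Set.Icc 0 s) t)
    (Φ : ℝ → ℝ)
    (hΦ : ∀ t, Φ t = (∫ s in t..T, ⟪Y s s, X s t⟫) + ⟪G (X T T), X T t⟫) :
    ∀ t ∈ Set.Icc (0:ℝ) T,
      HasDerivWithinAt Φ
        (-⟪Y t t, X t t⟫ + (∫ s in t..T, ⟪Y s s, f s t⟫) + ⟪G (X T T), f T t⟫)
        (Set.Icc 0 T) t := by
  intro t ht
  obtain ⟨ht0, htT⟩ := ht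
  set P : ℝ → ℝ → ℝ := fun s u => ⟪Y s s, X s u⟫ with hPdef
  set g : ℝ → ℝ → ℝ := fun s u => ⟪Y s s, f s u⟫ with hgdef
  -- continuity of s ↦ Y s s on the triangle
  have hYdiag : ContinuousOn (fun p : ℝ × ℝ => Y p.1 p.1)
      {p : ℝ × ℝ | 0 ≤ p.2 ∧ p.2 ≤ p.1 ∧ p.1 ≤ T} := by
    have hmap : Set.MapsTo (fun p : ℝ × ℝ => ((p.1, p.1) : ℝ × ℝ))
        {p : ℝ × ℝ | 0 ≤ p.2 ∧ p.2 ≤ p.1 ∧ p.1 ≤ T}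
        {p : ℝ × ℝ | 0 ≤ p.1 ∧ p.1 ≤ p.2 ∧ p.2 ≤ T} := by
      rintro ⟨a, b⟩ ⟨h1, h2, h3⟩
      exact ⟨h1.trans h2, le_rfl, h3⟩
    exact hYcont.comp ((continuous_fst.prodMk continuous_fst).continuousOn) hmap
  have hPc : ContinuousOn (fun p : ℝ × ℝ => P p.1 p.2)
      {p : ℝ × ℝ | 0 ≤ p.2 ∧ p.2 ≤ p.1 ∧ p.1 ≤ T} := hYdiag.inner hXcont
  have hgcont : ContinuousOn (fun p : ℝ × ℝ => g p.1 p.2)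
      {p : ℝ × ℝ | 0 ≤ p.2 ∧ p.2 ≤ p.1 ∧ p.1 ≤ T} := hYdiag.inner hfcont
  have hgc : ∀ s, 0 ≤ s → s ≤ T → ContinuousOn (g s) (Set.Icc 0 s) := by
    intro s h0 hsT
    have hmap : Set.MapsTo (fun u : ℝ => ((s, u) : ℝ × ℝ)) (Set.Icc 0 s)
        {p : ℝ × ℝ | 0 ≤ p.2 ∧ p.2 ≤ p.1 ∧ p.1 ≤ T} := fun u hu => ⟨hu.1, hu.2, hsT⟩
    have := hgcont.comp ((continuous_const.prodMk continuous_id).continuousOn) hmap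
    exact this
  -- FTC for the inner-product primitive
  have hftc : ∀ s a b, 0 ≤ a → a ≤ b → b ≤ s → s ≤ T →
      (∫ u in a..b, g s u) = P s b - P s a := by
    intro s a b h0a hab hbs hsT
    have h0s : 0 ≤ s := h0a.trans (hab.trans hbs)
    have hXs : ContinuousOn (X s) (Set.Icc 0 s) := (hXC1 s ⟨h0s, hsT⟩).continuousOn
    have hcont : ContinuousOn (fun u => P s u) (Set.Icc a b) := by
      exact (continuousOn_const.inner (hXs.mono (Set.Icc_subset_Icc h0a hbs)))
    have hderiv : ∀ x ∈ Set.Ioo a b, HasDerivWithinAt (fun u => P s u) (g s x) (Set.Ioi x) x := by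
      intro x hx
      have hx0 : 0 ≤ x := h0a.trans hx.1.le
      have hxs : x < s := lt_of_lt_of_le hx.2 hbs
      have hd : HasDerivWithinAt (X s) (f s x) (Set.Icc 0 s) x :=
        hXder s x hx0 hxs.le hsT
      have hd2 : HasDerivWithinAt (X s) (f s x) (Set.Ioi x) x := by
        apply hd.mono_of_mem_nhdsWithin
        exact nhdsWithin_mono x Set.Ioi_subset_Ici_self (Icc_mem_nhdsGE_of_mem ⟨hx0, hxs⟩)
      have := (hasDerivWithinAt_const x (Set.Ioi x) (Y s s)).inner ℝ hd2
      simpa using this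
    have hint : IntervalIntegrable (g s) MeasureTheory.volume a b :=
      ((hgc s h0s hsT).mono (Set.uIcc_subset_Icc ⟨h0a, hab.trans hbs⟩ ⟨h0a.trans hab, hbs⟩)).intervalIntegrable
    exact integral_eq_sub_of_hasDeriv_right_of_le hab hcont hderiv hint
  have hmain := lyap_aux T P g hPc hgcont hgc hftc t ht0 htT
  have htail : HasDerivWithinAt (fun u => ⟪G (X T T), X T u⟫) (⟪G (X T T), f T t⟫)
      (Set.Icc 0 T) t := by
    have := (hasDerivWithinAt_const t (Set.Icc 0 T) (G (X T T))).inner ℝ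
      (hXder T t ht0 htT le_rfl)
    simpa using this
  have hsum := hmain.add htail
  have : HasDerivWithinAt Φ ((-(P t t) + ∫ s in t..T, g s t) + ⟪G (X T T), f T t⟫)
      (Set.Icc 0 T) t := by
    refine hsum.congr (fun y _ => ?_) ?_
    · rw [hΦ y]; rfl
    · rw [hΦ t]; rfl
  simpa [hPdef, hgdef, add_assoc] using this
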